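/- For m, n ≥ 0, the q-identity Σ_{k=0}^{⌊n/4⌋} [m+k choose k]_{q^4} · [m+1 choose n−4k]_q · q^{C(n−4k,2)} = Σ_{k=0}^{⌊n/2⌋} (−1)^k · [m+k choose k]_{q^2} · [m+n−2k choose n−2k]_q holds as an identity of polynomials in q. -/

import Mathlib

open Polynomial PowerSeries Finset

/-- Gaussian binomial coefficient `[n choose k]_q` as a polynomial in `ℤ[q]`,
defined by the Pascal-type recurrence; it is `0` when `k > n`. -/
noncomputable def gauss : ℕ → ℕ → Polynomial ℤ
  | _, 0 => 1
  | 0, _ + 1 => 0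
  | n + 1, k + 1 => gauss n (k + 1) + Polynomial.X ^ (n - k) * gauss n k

/-- `p(N,k,n)`: number of partitions of `n` into at most `k` parts, each part
positive and at most `N`. -/
noncomputable def pcount (N k n : ℕ) : ℕ :=
  Nat.card {s : Multiset ℕ //
    s.sum = n ∧ s.card ≤ k ∧ ∀ x ∈ s, 0 < x ∧ x ≤ N}

/-- `p̄_r(N₁,N₂,k₁,k₂,n)`: number of two-colored partitions of `n` with at most `k₁`
parts of the first kind, each positive, divisible by `r` and at most `N₁·r`, and at
most `k₂` parts of the second kind, each positive and at most `N₂`. -/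
noncomputable def pbar (r N1 N2 k1 k2 n : ℕ) : ℕ :=
  Nat.card {p : Multiset ℕ × Multiset ℕ //
    p.1.sum + p.2.sum = n ∧ p.1.card ≤ k1 ∧ p.2.card ≤ k2 ∧
    (∀ x ∈ p.1, 0 < x ∧ r ∣ x ∧ x ≤ N1 * r) ∧ (∀ x ∈ p.2, 0 < x ∧ x ≤ N2)}

/-- `p̄_r` with integer arguments: zero if any argument is negative. -/
noncomputable def pbarZ (r : ℕ) (N1 N2 k1 k2 n : ℤ) : ℕ :=
  if 0 ≤ N1 ∧ 0 ≤ N2 ∧ 0 ≤ k1 ∧ 0 ≤ k2 ∧ 0 ≤ n then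
    pbar r N1.toNat N2.toNat k1.toNat k2.toNat n.toNat
  else 0

/-- `Q̄_r(N₁,N₂,k₁,k₂,n)`: number of two-colored partitions of `n` with exactly `k₁`
distinct parts of the first kind, each positive, divisible by `r` and at most `N₁·r`,
and exactly `k₂` distinct parts of the second kind, each positive and at most `N₂`. -/
noncomputable def Qbar (r N1 N2 k1 k2 n : ℕ) : ℕ :=
  Nat.card {p : Multiset ℕ × Multiset ℕ //
    p.1.sum + p.2.sum = n ∧ p.1.Nodup ∧ p.2.Nodup ∧ p.1.card = k1 ∧ p.2.card = k2 ∧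
    (∀ x ∈ p.1, 0 < x ∧ r ∣ x ∧ x ≤ N1 * r) ∧ (∀ x ∈ p.2, 0 < x ∧ x ≤ N2)}

lemma gauss_zero (n : ℕ) : gauss n 0 = 1 := by cases n <;> rfl

lemma gauss_eq_zero : ∀ {n k : ℕ}, n < k → gauss n k = 0
  | 0, _ + 1, _ => rfl
  | n + 1, k + 1, h => by
      rw [gauss, gauss_eq_zero (by omega), gauss_eq_zero (by omega), mul_zero, add_zero]

lemma gauss_self (n : ℕ) : gauss n n = 1 := by
  induction n with
  | zero => rfl
  | succ n ih => rw [gauss, gauss_eq_zero (by omega), zero_add, Nat.sub_self, pow_zero,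
      one_mul, ih]

section Sgen

variable {R : Type*} [CommRing R]

/-- coefficient helper -/
lemma coeff_helper (c : R) (r n : ℕ) (f : PowerSeries R) :
    (PowerSeries.coeff (R := R) n) (PowerSeries.C (R := R) c * PowerSeries.X ^ r * f) =
      if r ≤ n then c * (PowerSeries.coeff (R := R) (n - r)) f else 0 := by
  rw [mul_assoc, PowerSeries.coeff_C_mul, PowerSeries.coeff_X_pow_mul']
  split_ifs <;> simp

/-- generating series of `gauss (m + j) j` along multiples of `r`, twisted by sign `ε`. -/
noncomputable def Sgen (φ : Polynomial ℤ →+* R) (ε : R) (r m : ℕ) : PowerSeries R :=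
  PowerSeries.mk fun n => if r ∣ n then ε ^ (n / r) * φ (gauss (m + n / r) (n / r)) else 0

lemma Sgen_step (φ : Polynomial ℤ →+* R) (ε : R) {r : ℕ} (hr : 0 < r) (m : ℕ) :
    (1 - PowerSeries.C (R := R) (ε * φ Polynomial.X ^ (m + 1)) * PowerSeries.X ^ r) *
      Sgen φ ε r (m + 1) = Sgen φ ε r m := by
  ext n
  rw [sub_mul, one_mul, map_sub, coeff_helper]
  simp only [Sgen, PowerSeries.coeff_mk]
  by_cases hd : r ∣ n
  · obtain ⟨j, rfl⟩ := hd
    rcases Nat.eq_zero_or_pos j with rfl | hj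
    · simp [hr.ne', gauss_zero]
    · have h1 : r ≤ r * j := Nat.le_mul_of_pos_right r hj
      have h2 : r * j - r = r * (j - 1) := by
        rw [Nat.mul_sub, mul_one]
      rw [if_pos (Dvd.intro j rfl), if_pos h1, h2, if_pos (Dvd.intro (j-1) rfl),
        if_pos (Dvd.intro j rfl)]
      have hjj : r * j / r = j := Nat.mul_div_cancel_left j hr
      have hjj' : r * (j - 1) / r = j - 1 := Nat.mul_div_cancel_left (j-1) hr
      rw [hjj, hjj']
      obtain ⟨j', rfl⟩ : ∃ j', j = j' + 1 := ⟨j - 1, by omega⟩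
      simp only [Nat.add_sub_cancel]
      rw [show m + 1 + (j' + 1) = (m + 1 + j') + 1 from by omega,
        show m + (j' + 1) = m + 1 + j' from by omega, gauss,
        show m + 1 + j' - j' = m + 1 from by omega, map_add, map_mul, map_pow]
      ring
  · rw [if_neg hd, if_neg hd]
    split_ifs with h1 h2
    · exfalso
      obtain ⟨c, hc⟩ := h2
      exact hd ⟨c + 1, by rw [Nat.mul_succ]; omega⟩
    · simp
    · simp

lemma Sgen_base (φ : Polynomial ℤ →+* R) (ε : R) {r : ℕ} (hr : 0 < r) :
    (1 - PowerSeries.C (R := R) ε * PowerSeries.X ^ r) * Sgen φ ε r 0 = 1 := by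
  ext n
  rw [sub_mul, one_mul, map_sub, coeff_helper]
  simp only [Sgen, PowerSeries.coeff_mk]
  by_cases hd : r ∣ n
  · obtain ⟨j, rfl⟩ := hd
    rcases Nat.eq_zero_or_pos j with rfl | hj
    · simp [hr.ne', gauss_zero]
    · have h1 : r ≤ r * j := Nat.le_mul_of_pos_right r hj
      have h2 : r * j - r = r * (j - 1) := by
        rw [Nat.mul_sub, mul_one]
      rw [if_pos (Dvd.intro j rfl), if_pos h1, h2, if_pos (Dvd.intro (j-1) rfl)]
      have hjj : r * j / r = j := Nat.mul_div_cancel_left j hr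
      have hjj' : r * (j - 1) / r = j - 1 := Nat.mul_div_cancel_left (j-1) hr
      rw [hjj, hjj', zero_add, zero_add, gauss_self, gauss_self, map_one, mul_one, mul_one]
      have hne : r * j ≠ 0 := by positivity
      rw [PowerSeries.coeff_one, if_neg hne]
      obtain ⟨j', rfl⟩ : ∃ j', j = j' + 1 := ⟨j - 1, by omega⟩
      simp [pow_succ]
      ring
  · have hn : n ≠ 0 := by rintro rfl; exact hd (dvd_zero r)
    rw [if_neg hd, PowerSeries.coeff_one, if_neg hn]
    split_ifs with h1 h2
    · exfalso
      obtain ⟨c, hc⟩ := h2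
      exact hd ⟨c + 1, by rw [Nat.mul_succ]; omega⟩
    · simp
    · simp

lemma Sgen_inv (φ : Polynomial ℤ →+* R) (ε : R) {r : ℕ} (hr : 0 < r) (m : ℕ) :
    (∏ i ∈ Finset.range (m + 1),
        (1 - PowerSeries.C (R := R) (ε * φ Polynomial.X ^ i) * PowerSeries.X ^ r)) *
      Sgen φ ε r m = 1 := by
  induction m with
  | zero => simpa using Sgen_base φ ε hr
  | succ m ih =>
      rw [Finset.prod_range_succ, mul_assoc, Sgen_step φ ε hr m, ih]

end Sgen

/-- generating polynomial-series of `gauss (m+1) n * q^(C(n,2))`. -/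
noncomputable def Aser (m : ℕ) : PowerSeries (Polynomial ℤ) :=
  PowerSeries.mk fun n => gauss (m + 1) n * Polynomial.X ^ (n.choose 2)

lemma Aser_eq (m : ℕ) :
    Aser m = ∏ i ∈ Finset.range (m + 1),
      (1 + PowerSeries.C (R := Polynomial ℤ) (Polynomial.X ^ i) * PowerSeries.X) := by
  induction m with
  | zero =>
      rw [Finset.prod_range_one, pow_zero, map_one, one_mul]
      ext n
      rw [Aser, PowerSeries.coeff_mk, map_add, PowerSeries.coeff_one, PowerSeries.coeff_X]
      match n with
      | 0 => simp [gauss_zero]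
      | 1 => simp [show gauss 1 1 = 1 from gauss_self 1]
      | (k + 2) => simp [gauss_eq_zero (show 1 < k + 2 by omega)]
  | succ m ih =>
      rw [Finset.prod_range_succ, ← ih]
      have hsplit : Aser m * (1 + PowerSeries.C (R := Polynomial ℤ) (Polynomial.X ^ (m + 1)) *
          PowerSeries.X) = Aser m + PowerSeries.C (R := Polynomial ℤ) (Polynomial.X ^ (m + 1)) *
          PowerSeries.X ^ 1 * Aser m := by ring
      rw [hsplit]
      ext n
      rw [map_add, coeff_helper]
      simp only [Aser, PowerSeries.coeff_mk]
      match n with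
      | 0 => simp [gauss_zero]
      | (n' + 1) =>
          rw [if_pos (by omega : 1 ≤ n' + 1)]
          simp only [Nat.add_sub_cancel]
          rw [show m + 1 + 1 = (m + 1) + 1 from rfl, gauss]
          by_cases hn : n' ≤ m + 1
          · have hch : (n' + 1).choose 2 = n'.choose 2 + n' := by
              rw [Nat.choose_two_right, Nat.choose_two_right]
              exact Nat.triangle_succ n'
            have he : m + 1 - n' + (n' + 1).choose 2 = m + 1 + n'.choose 2 := by omega
            have hterm : Polynomial.X ^ (m + 1 - n') * gauss (m + 1) n' *
                Polynomial.X ^ ((n' + 1).choose 2) =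
                Polynomial.X ^ (m + 1) * (gauss (m + 1) n' * Polynomial.X ^ n'.choose 2) :=
              calc Polynomial.X ^ (m + 1 - n') * gauss (m + 1) n' *
                  Polynomial.X ^ ((n' + 1).choose 2)
                  = gauss (m + 1) n' * Polynomial.X ^ (m + 1 - n' + (n' + 1).choose 2) := by ring
                _ = gauss (m + 1) n' * Polynomial.X ^ (m + 1 + n'.choose 2) := by rw [he]
                _ = Polynomial.X ^ (m + 1) * (gauss (m + 1) n' * Polynomial.X ^ n'.choose 2) := by
                    ring
            rw [add_mul, hterm]
          · rw [gauss_eq_zero (show m + 1 < n' from by omega)]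
            ring

lemma sum_range_div {M : Type*} [AddCommMonoid M] (d n : ℕ) (hd : 0 < d) (F : ℕ → M)
    (h : ∀ j, ¬ d ∣ j → F j = 0) :
    ∑ j ∈ Finset.range (n + 1), F j = ∑ k ∈ Finset.range (n / d + 1), F (d * k) := by
  have himg : (Finset.range (n / d + 1)).image (fun k => d * k) ⊆ Finset.range (n + 1) := by
    intro j hj
    obtain ⟨k, hk, rfl⟩ := Finset.mem_image.mp hj
    have hk' : k ≤ n / d := Nat.lt_succ_iff.mp (Finset.mem_range.mp hk)
    have h2 : d * k ≤ n := le_trans (Nat.mul_le_mul_left d hk') (Nat.mul_div_le n d)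
    exact Finset.mem_range.mpr (by omega)
  have hzero : ∀ j ∈ Finset.range (n + 1),
      j ∉ (Finset.range (n / d + 1)).image (fun k => d * k) → F j = 0 := by
    intro j hj hnot
    by_cases hdj : d ∣ j
    · obtain ⟨k, rfl⟩ := hdj
      exfalso
      apply hnot
      refine Finset.mem_image.mpr ⟨k, Finset.mem_range.mpr ?_, rfl⟩
      have h1 : d * k ≤ n := Nat.lt_succ_iff.mp (Finset.mem_range.mp hj)
      have : k ≤ n / d := Nat.le_div_iff_mul_le hd |>.mpr (by rwa [Nat.mul_comm] at h1)
      omega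
    · exact h j hdj
  calc ∑ j ∈ Finset.range (n + 1), F j
      = ∑ j ∈ (Finset.range (n / d + 1)).image (fun k => d * k), F j :=
        (Finset.sum_subset himg hzero).symm
    _ = ∑ k ∈ Finset.range (n / d + 1), F (d * k) :=
        Finset.sum_image (fun a _ b _ hab => Nat.eq_of_mul_eq_mul_left hd hab)

/-- substitution `q ↦ q^c` as a ring hom. -/
noncomputable def φc (c : ℕ) : Polynomial ℤ →+* Polynomial ℤ :=
  Polynomial.eval₂RingHom Polynomial.C (Polynomial.X ^ c)

lemma φc_X (c : ℕ) : φc c Polynomial.X = Polynomial.X ^ c := Polynomial.eval₂_X _ _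

lemma φc_comp (c : ℕ) (p : Polynomial ℤ) : φc c p = p.comp (Polynomial.X ^ c) := rfl

lemma key_eq (m : ℕ) :
    Sgen (φc 4) 1 4 m * Aser m =
      Sgen (φc 2) (-1) 2 m * Sgen (RingHom.id (Polynomial ℤ)) 1 1 m := by
  have h4 := Sgen_inv (φc 4) (1 : Polynomial ℤ) (r := 4) (by norm_num) m
  have h1 := Sgen_inv (RingHom.id (Polynomial ℤ)) (1 : Polynomial ℤ) (r := 1) (by norm_num) m
  have h2 := Sgen_inv (φc 2) (-1 : Polynomial ℤ) (r := 2) (by norm_num) m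
  set A := Aser m with hA
  set S4 := Sgen (φc 4) (1 : Polynomial ℤ) 4 m with hS4
  set S1 := Sgen (RingHom.id (Polynomial ℤ)) (1 : Polynomial ℤ) 1 m with hS1
  set T2 := Sgen (φc 2) (-1 : Polynomial ℤ) 2 m with hT2
  set P4 := ∏ i ∈ Finset.range (m + 1),
    (1 - PowerSeries.C (R := Polynomial ℤ) ((1 : Polynomial ℤ) * φc 4 Polynomial.X ^ i) *
      PowerSeries.X ^ 4) with hP4
  set P1 := ∏ i ∈ Finset.range (m + 1),
    (1 - PowerSeries.C (R := Polynomial ℤ) ((1 : Polynomial ℤ) *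
      (RingHom.id (Polynomial ℤ)) Polynomial.X ^ i) * PowerSeries.X ^ 1) with hP1
  set P2 := ∏ i ∈ Finset.range (m + 1),
    (1 - PowerSeries.C (R := Polynomial ℤ) ((-1 : Polynomial ℤ) * φc 2 Polynomial.X ^ i) *
      PowerSeries.X ^ 2) with hP2
  have hfact : P4 = A * P1 * P2 := by
    rw [hA, Aser_eq, hP4, hP1, hP2, ← Finset.prod_mul_distrib, ← Finset.prod_mul_distrib]
    refine Finset.prod_congr rfl fun i _ => ?_
    rw [φc_X, φc_X, RingHom.id_apply]
    have e4 : ((Polynomial.X : Polynomial ℤ) ^ 4) ^ i = (Polynomial.X ^ i) ^ 4 := by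
      rw [← pow_mul, ← pow_mul, Nat.mul_comm]
    have e2 : ((Polynomial.X : Polynomial ℤ) ^ 2) ^ i = (Polynomial.X ^ i) ^ 2 := by
      rw [← pow_mul, ← pow_mul, Nat.mul_comm]
    rw [e4, e2]
    simp only [map_pow, map_mul, map_neg, map_one, one_mul]
    ring
  have e1 : A * S4 * P4 = A := by
    rw [show A * S4 * P4 = A * (P4 * S4) from by ring, h4, mul_one]
  have e2 : T2 * S1 * P4 = A := by
    rw [hfact, show T2 * S1 * (A * P1 * P2) = A * ((P1 * S1) * (P2 * T2)) from by ring,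
      h1, h2, one_mul, mul_one]
  calc S4 * A = A * S4 * (P4 * S4) := by rw [h4, mul_one]; ring
    _ = (A * S4 * P4) * S4 := by ring
    _ = (T2 * S1 * P4) * S4 := by rw [e1, e2]
    _ = T2 * S1 * (P4 * S4) := by ring
    _ = T2 * S1 := by rw [h4, mul_one]

theorem stmt13 (m n : ℕ) :
    ∑ k ∈ Finset.range (n / 4 + 1),
        (gauss (m + k) k).comp (Polynomial.X ^ 4) * gauss (m + 1) (n - 4 * k) *
          Polynomial.X ^ (n - 4 * k).choose 2 =
      ∑ k ∈ Finset.range (n / 2 + 1),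
        (-1 : Polynomial ℤ) ^ k * (gauss (m + k) k).comp (Polynomial.X ^ 2) *
          gauss (m + n - 2 * k) (n - 2 * k) := by
  have hL : (PowerSeries.coeff (R := Polynomial ℤ) n) (Sgen (φc 4) 1 4 m * Aser m) =
      ∑ k ∈ Finset.range (n / 4 + 1),
        (gauss (m + k) k).comp (Polynomial.X ^ 4) * gauss (m + 1) (n - 4 * k) *
          Polynomial.X ^ (n - 4 * k).choose 2 := by
    rw [PowerSeries.coeff_mul, Finset.Nat.sum_antidiagonal_eq_sum_range_succ
      (fun i j => (PowerSeries.coeff (R := Polynomial ℤ) i) (Sgen (φc 4) 1 4 m) *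
        (PowerSeries.coeff (R := Polynomial ℤ) j) (Aser m)) n]
    simp only [Sgen, Aser, PowerSeries.coeff_mk]
    rw [sum_range_div 4 n (by norm_num)
      (fun j => (if 4 ∣ j then (1 : Polynomial ℤ) ^ (j / 4) * (φc 4) (gauss (m + j / 4) (j / 4))
          else 0) * (gauss (m + 1) (n - j) * Polynomial.X ^ (n - j).choose 2))
      (fun j hj => by simp only [if_neg hj, zero_mul])]
    refine Finset.sum_congr rfl fun k hk => ?_
    rw [if_pos ⟨k, rfl⟩, Nat.mul_div_cancel_left k (by norm_num), one_pow, φc_comp]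
    ring
  have hR : (PowerSeries.coeff (R := Polynomial ℤ) n)
      (Sgen (φc 2) (-1) 2 m * Sgen (RingHom.id (Polynomial ℤ)) 1 1 m) =
      ∑ k ∈ Finset.range (n / 2 + 1),
        (-1 : Polynomial ℤ) ^ k * (gauss (m + k) k).comp (Polynomial.X ^ 2) *
          gauss (m + n - 2 * k) (n - 2 * k) := by
    rw [PowerSeries.coeff_mul, Finset.Nat.sum_antidiagonal_eq_sum_range_succ
      (fun i j => (PowerSeries.coeff (R := Polynomial ℤ) i) (Sgen (φc 2) (-1) 2 m) *
        (PowerSeries.coeff (R := Polynomial ℤ) j) (Sgen (RingHom.id (Polynomial ℤ)) 1 1 m)) n]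
    simp only [Sgen, PowerSeries.coeff_mk]
    rw [sum_range_div 2 n (by norm_num)
      (fun j => (if 2 ∣ j then (-1 : Polynomial ℤ) ^ (j / 2) * (φc 2) (gauss (m + j / 2) (j / 2))
          else 0) * (if 1 ∣ (n - j) then (1 : Polynomial ℤ) ^ ((n - j) / 1) *
            (RingHom.id (Polynomial ℤ)) (gauss (m + (n - j) / 1) ((n - j) / 1)) else 0))
      (fun j hj => by simp only [if_neg hj, zero_mul])]
    refine Finset.sum_congr rfl fun k hk => ?_
    have hkn : 2 * k ≤ n := by
      have := Finset.mem_range.mp hk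
      omega
    rw [if_pos ⟨k, rfl⟩, Nat.mul_div_cancel_left k (by norm_num), if_pos (one_dvd _),
      Nat.div_one, one_pow, one_mul, φc_comp, RingHom.id_apply,
      show m + (n - 2 * k) = m + n - 2 * k from by omega]
  rw [← hL, ← hR, key_eq]
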